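/- arXiv:2110.13072 — 5 statements merged into one kernel-verified Lean document; each statement's English description precedes it below -/
import Mathlib

section
/- For every choice of parameters a, b, c ∈ ℂ, there exists a non-constant formal power series F̂ ∈ ℂ[[x,y₁,y₂]] satisfying x²·∂F̂/∂x + ((1+ax)y₁ + bxy₂)·∂F̂/∂y₁ + (cxy₁ − (1+ax)y₂)·∂F̂/∂y₂ = 0 as a formal power series in x, y₁, y₂; that is, the vector field X_{a,b,c} possesses a non-constant formal first integral. -/
/-- Formal partial derivative of a multivariate formal power series with
respect to the `i`-th variable: the coefficient of the derivative at a
multi-index `d` is `(d i + 1)` times the coefficient of the series at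
`d + single i 1`. -/
noncomputable def mvPderiv {n : ℕ} (i : Fin n) (F : MvPowerSeries (Fin n) ℂ) :
    MvPowerSeries (Fin n) ℂ :=
  fun d => ((d i : ℕ) + 1 : ℂ) * MvPowerSeries.coeff (R := ℂ) (d + Finsupp.single i 1) F

open MvPowerSeries

noncomputable def rec3 (a b c : ℂ) : ℕ → ℂ × ℂ × ℂ
  | 0 => (0, 1, 0)
  | n + 1 =>
    (-(((n : ℂ) + 2 * a) * (rec3 a b c n).1 + c * (rec3 a b c n).2.1) / 2,
     -2 * (b * (-(((n : ℂ) + 2 * a) * (rec3 a b c n).1 + c * (rec3 a b c n).2.1) / 2)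
        + c * ((((n : ℂ) - 2 * a) * (rec3 a b c n).2.2 + b * (rec3 a b c n).2.1) / 2))
        / ((n : ℂ) + 1),
     (((n : ℂ) - 2 * a) * (rec3 a b c n).2.2 + b * (rec3 a b c n).2.1) / 2)

noncomputable def Af (a b c : ℂ) (n : ℕ) : ℂ := (rec3 a b c n).1
noncomputable def Bf (a b c : ℂ) (n : ℕ) : ℂ := (rec3 a b c n).2.1
noncomputable def Cf (a b c : ℂ) (n : ℕ) : ℂ := (rec3 a b c n).2.2

@[simp] lemma Af_zero (a b c : ℂ) : Af a b c 0 = 0 := rfl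
@[simp] lemma Bf_zero (a b c : ℂ) : Bf a b c 0 = 1 := rfl
@[simp] lemma Cf_zero (a b c : ℂ) : Cf a b c 0 = 0 := rfl

lemma Af_succ (a b c : ℂ) (n : ℕ) :
    Af a b c (n+1) = -(((n : ℂ) + 2*a) * Af a b c n + c * Bf a b c n) / 2 := by
  simp [Af, Bf, rec3]

lemma Cf_succ (a b c : ℂ) (n : ℕ) :
    Cf a b c (n+1) = (((n : ℂ) - 2*a) * Cf a b c n + b * Bf a b c n) / 2 := by
  simp [Cf, Bf, rec3]

lemma Bf_succ (a b c : ℂ) (n : ℕ) :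
    Bf a b c (n+1) = -2 * (b * Af a b c (n+1) + c * Cf a b c (n+1)) / ((n : ℂ) + 1) := by
  simp [Af, Bf, Cf, rec3]

lemma hA (a b c : ℂ) (n : ℕ) :
    2 * Af a b c (n+1) + ((n : ℂ) + 2*a) * Af a b c n + c * Bf a b c n = 0 := by
  rw [Af_succ]; ring

lemma hC (a b c : ℂ) (n : ℕ) :
    2 * Cf a b c (n+1) - ((n : ℂ) - 2*a) * Cf a b c n - b * Bf a b c n = 0 := by
  rw [Cf_succ]; ring

lemma hB (a b c : ℂ) (n : ℕ) :
    ((n : ℂ) + 1) * Bf a b c (n+1) + 2*b * Af a b c (n+1) + 2*c * Cf a b c (n+1) = 0 := by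
  rw [Bf_succ]
  have h : ((n : ℂ) + 1) ≠ 0 := Nat.cast_add_one_ne_zero n
  field_simp
  ring

/-- The coefficient table: `Gf a b c n p q` is the coefficient of
`x^n y₁^p y₂^q` in the first integral. -/
noncomputable def Gf (a b c : ℂ) (n : ℕ) : ℕ → ℕ → ℂ
  | 2, 0 => Af a b c n
  | 1, 1 => Bf a b c n
  | 0, 2 => Cf a b c n
  | _, _ => 0

lemma pair_le_iff (i j : Fin 3) (hij : i ≠ j) (d : Fin 3 →₀ ℕ) :
    Finsupp.single i 1 + Finsupp.single j 1 ≤ d ↔ 1 ≤ d i ∧ 1 ≤ d j := by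
  simp only [Finsupp.le_def, Finsupp.add_apply, Finsupp.single_apply]
  constructor
  · intro h
    refine ⟨?_, ?_⟩
    · have := h i; simp [hij] at this; omega
    · have := h j; simp [Ne.symm hij] at this; omega
  · rintro ⟨h1, h2⟩ k
    by_cases hk1 : i = k <;> by_cases hk2 : j = k <;> simp [hk1, hk2] at * <;> omega

/-- for all `a b c : ℂ`, the vector field
`X_{a,b,c} = x² ∂ₓ + ((1+ax)y₁ + bxy₂) ∂_{y₁} + (cxy₁ − (1+ax)y₂) ∂_{y₂}`
possesses a non-constant formal first integral `F̂ ∈ ℂ[[x,y₁,y₂]]`. -/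
theorem stmt1 (a b c : ℂ) :
    ∃ F : MvPowerSeries (Fin 3) ℂ,
      (¬ ∃ k : ℂ, F = MvPowerSeries.C (σ := Fin 3) (R := ℂ) k) ∧
      (X 0 : MvPowerSeries (Fin 3) ℂ) ^ 2 * mvPderiv 0 F
        + ((1 + C (σ := Fin 3) (R := ℂ) a * X 0) * X 1 + C (σ := Fin 3) (R := ℂ) b * X 0 * X 2) * mvPderiv 1 F
        + (C (σ := Fin 3) (R := ℂ) c * X 0 * X 1 - (1 + C (σ := Fin 3) (R := ℂ) a * X 0) * X 2) * mvPderiv 2 F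
        = 0 := by
  classical
  refine ⟨(fun d => Gf a b c (d 0) (d 1) (d 2) : MvPowerSeries (Fin 3) ℂ), ?_, ?_⟩
  · rintro ⟨k, hk⟩
    have h1 := congrArg
      (fun F => MvPowerSeries.coeff (R := ℂ) (Finsupp.single 1 1 + Finsupp.single 2 1) F) hk
    beta_reduce at h1
    have hne : (Finsupp.single 1 1 + Finsupp.single 2 1 : Fin 3 →₀ ℕ) ≠ 0 := by
      intro h
      have := DFunLike.congr_fun h (1 : Fin 3)
      simp [Finsupp.add_apply, Finsupp.single_apply] at this
    rw [coeff_C, if_neg hne] at h1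
    simp only [coeff, LinearMap.proj_apply] at h1
    have h2 : Gf a b c ((Finsupp.single 1 1 + Finsupp.single 2 1 : Fin 3 →₀ ℕ) 0)
        ((Finsupp.single 1 1 + Finsupp.single 2 1 : Fin 3 →₀ ℕ) 1)
        ((Finsupp.single 1 1 + Finsupp.single 2 1 : Fin 3 →₀ ℕ) 2) = 0 := h1
    have c1 : ((1:Fin 3) = 0) = False := by decide
    have c2 : ((2:Fin 3) = 0) = False := by decide
    have c3 : ((2:Fin 3) = 1) = False := by decide
    have c4 : ((1:Fin 3) = 2) = False := by decide
    simp only [Finsupp.add_apply, Finsupp.single_apply, c1, c2, c3, c4,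
      if_true, if_false, add_zero, zero_add, Finsupp.single_eq_same] at h2
    have : Bf a b c 0 = 0 := h2
    rw [Bf_zero] at this
    exact one_ne_zero this
  · have hm : ∀ (k : ℂ) (i : Fin 3),
        C (σ := Fin 3) (R := ℂ) k * X i = monomial (R := ℂ) (Finsupp.single i 1) k := by
      intro k i
      rw [X_def, ← monomial_zero_eq_C_apply, monomial_mul_monomial, zero_add, mul_one]
    have hm2 : ∀ (k : ℂ) (m : Fin 3 →₀ ℕ) (j : Fin 3),
        monomial (R := ℂ) m k * X j = monomial (R := ℂ) (m + Finsupp.single j 1) k := by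
      intro k m j; rw [X_def, monomial_mul_monomial, mul_one]
    have h0 : (X 0 : MvPowerSeries (Fin 3) ℂ)^2 = monomial (R := ℂ) (Finsupp.single 0 2) 1 :=
      X_pow_eq 0 2
    have e1 : (1 + C (σ := Fin 3) (R := ℂ) a * X 0) * X 1 + C (σ := Fin 3) (R := ℂ) b * X 0 * X 2
        = monomial (R := ℂ) (Finsupp.single 1 1) (1:ℂ)
          + monomial (R := ℂ) (Finsupp.single 0 1 + Finsupp.single 1 1) a
          + monomial (R := ℂ) (Finsupp.single 0 1 + Finsupp.single 2 1) b := by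
      rw [add_mul, one_mul, hm a 0, hm b 0, hm2, hm2, X_def]
    have e2 : C (σ := Fin 3) (R := ℂ) c * X 0 * X 1 - (1 + C (σ := Fin 3) (R := ℂ) a * X 0) * X 2
        = monomial (R := ℂ) (Finsupp.single 0 1 + Finsupp.single 1 1) c
          - monomial (R := ℂ) (Finsupp.single 2 1) (1:ℂ)
          - monomial (R := ℂ) (Finsupp.single 0 1 + Finsupp.single 2 1) a := by
      rw [add_mul, one_mul, hm c 0, hm a 0, hm2, hm2, X_def]; ring
    rw [h0, e1, e2]
    apply MvPowerSeries.ext; intro d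
    simp only [map_zero, map_add, map_sub, add_mul, sub_mul, coeff_monomial_mul]
    have hF : ∀ e, coeff (R := ℂ) e (fun d => Gf a b c (d 0) (d 1) (d 2) : MvPowerSeries (Fin 3) ℂ)
        = Gf a b c (e 0) (e 1) (e 2) := fun _ => rfl
    simp only [mvPderiv, coeff_apply, hF, Finsupp.add_apply, Finsupp.tsub_apply,
      Finsupp.single_apply, Finsupp.single_le_iff,
      pair_le_iff 0 1 (by decide), pair_le_iff 0 2 (by decide)]
    have c1 : ((0:Fin 3) = 2) = False := by decide
    have c2 : ((1:Fin 3) = 2) = False := by decide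
    have c3 : ((2:Fin 3) = 1) = False := by decide
    have c4 : ((2:Fin 3) = 0) = False := by decide
    have c5 : ((0:Fin 3) = 1) = False := by decide
    have c6 : ((1:Fin 3) = 0) = False := by decide
    simp only [c1, c2, c3, c4, c5, c6, if_true, if_false, add_zero, Nat.sub_zero,
      zero_add, one_mul]
    generalize d 0 = n
    generalize d 1 = p
    generalize d 2 = q
    rcases p with _ | _ | _ | p <;> rcases q with _ | _ | _ | q <;>
        try (simp [Gf])
    -- case (0, 2)
    · rcases n with _ | _ | n
      · simp [Gf]
      · have h := hC a b c 0
        push_cast at h ⊢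
        simp only [Gf] at *
        push_cast at *
        linear_combination -h
      · have h := hC a b c (n+1)
        simp only [Gf, Nat.add_sub_cancel] at *
        push_cast at *
        linear_combination -h
    -- case (1, 1)
    · rcases n with _ | _ | n
      · simp [Gf]
      · simp [Gf]; try ring
      · have h := hB a b c n
        simp only [Gf, Nat.add_sub_cancel] at *
        push_cast at *
        linear_combination h
    -- case (2, 0)
    · rcases n with _ | _ | n
      · simp [Gf]
      · have h := hA a b c 0
        simp only [Gf] at *
        push_cast at *
        linear_combination h
      · have h := hA a b c (n+1)
        simp only [Gf, Nat.add_sub_cancel] at *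
        push_cast at *
        linear_combination h
end

section
/- Let a, b, c ∈ ℂ. Let A(x) and D(x) be the 2×2 matrices with entries in the formal power series ring ℂ[[x]] given by A(x) = [[1+ax, bx],[cx, −1−ax]] and D(x) = [[1+ax, 0],[0, −1−ax]]. Then there exists a 2×2 matrix T̂(x) with entries in ℂ[[x]] whose constant term T̂(0) is the identity matrix I, such that x²·(dT̂/dx)(x) = A(x)·T̂(x) − T̂(x)·D(x), where dT̂/dx denotes the entrywise formal derivative. Equivalently, the formal gauge transformation y = T̂(x)u conjugates the linear system x² dy/dx = A(x) y to the diagonal system x² du/dx = D(x) u. -/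
open PowerSeries

/-- Coefficients `(t11 n, t12 n, t21 n, t22 n)` of the formal gauge transformation. -/
noncomputable def gaugeCo (a b c : ℂ) : ℕ → ℂ × ℂ × ℂ × ℂ
  | 0 => (1, 0, 0, 1)
  | n+1 =>
    let v := gaugeCo a b c n
    let p := (((n : ℂ) - 2*a) * v.2.1 - b * v.2.2.2) / 2
    let q := (c * v.1 - ((n : ℂ) + 2*a) * v.2.2.1) / 2
    (b * q / ((n : ℂ)+1), p, q, c * p / ((n : ℂ)+1))

lemma coeff_X2D_zero (f : PowerSeries ℂ) :
    coeff 0 ((X : PowerSeries ℂ)^2 * derivativeFun f) = 0 := by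
  simp [coeff_X_pow_mul']

lemma coeff_X2D_one (f : PowerSeries ℂ) :
    coeff 1 ((X : PowerSeries ℂ)^2 * derivativeFun f) = 0 := by
  simp [coeff_X_pow_mul']

lemma coeff_X2D (f : ℕ → ℂ) (n : ℕ) :
    coeff (n+2) ((X : PowerSeries ℂ)^2 * derivativeFun (mk f)) = f (n+1) * (n+1) := by
  rw [coeff_X_pow_mul]
  exact (coeff_derivative (mk f) n).trans (by rw [coeff_mk])

lemma coeff_CX_mul (r : ℂ) (f : PowerSeries ℂ) (n : ℕ) :
    coeff (n+1) (C r * X * f) = r * coeff n f := by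
  rw [mul_assoc, coeff_C_mul, coeff_succ_X_mul]

lemma coeff_CX_mul_zero (r : ℂ) (f : PowerSeries ℂ) :
    coeff 0 (C r * X * f) = 0 := by
  rw [mul_assoc, coeff_C_mul, coeff_zero_eq_constantCoeff]
  simp

lemma coeff_two_mul' (f : PowerSeries ℂ) (n : ℕ) :
    coeff n (2 * f) = 2 * coeff n f := by
  rw [two_mul, map_add, two_mul]

/-- there exists a formal gauge transformation `T̂(x)`, with
`T̂(0) = I`, conjugating the linear system `x² y' = A(x) y` with
`A(x) = [[1+ax, bx],[cx, −1−ax]]` to the diagonal system `x² u' = D(x) u`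
with `D(x) = [[1+ax, 0],[0, −1−ax]]`; i.e. `x² T̂' = A T̂ − T̂ D`. -/
theorem stmt2 (a b c : ℂ) :
    ∃ T : Matrix (Fin 2) (Fin 2) (PowerSeries ℂ),
      -- the constant term of `T̂` is the identity matrix
      T.map (PowerSeries.constantCoeff) = 1 ∧
      -- `x² · dT̂/dx = A(x) · T̂ − T̂ · D(x)` (entrywise formal derivative)
      ((PowerSeries.X : PowerSeries ℂ) ^ 2) • T.map (PowerSeries.derivativeFun) =
        (!![1 + PowerSeries.C a * PowerSeries.X, PowerSeries.C b * PowerSeries.X;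
            PowerSeries.C c * PowerSeries.X, -1 - PowerSeries.C a * PowerSeries.X] : Matrix (Fin 2) (Fin 2) (PowerSeries ℂ)) * T
        - T * (!![1 + PowerSeries.C a * PowerSeries.X, 0;
                  0, -1 - PowerSeries.C a * PowerSeries.X] : Matrix (Fin 2) (Fin 2) (PowerSeries ℂ)) := by
  set r : ℕ → ℂ := fun n => (gaugeCo a b c n).1 with hr
  set p : ℕ → ℂ := fun n => (gaugeCo a b c n).2.1 with hp
  set q : ℕ → ℂ := fun n => (gaugeCo a b c n).2.2.1 with hq
  set s : ℕ → ℂ := fun n => (gaugeCo a b c n).2.2.2 with hs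
  -- E11 : x² t11' = b x t21
  have E11 : (X : PowerSeries ℂ)^2 * derivativeFun (mk r) = C b * X * mk q := by
    ext n
    rcases n with _ | _ | n
    · rw [coeff_X2D_zero, coeff_CX_mul_zero]
    · rw [coeff_X2D_one]
      show 0 = coeff (0+1) _
      rw [coeff_CX_mul, coeff_mk]
      simp [hq, gaugeCo]
    · rw [coeff_X2D]
      show _ = coeff ((n+1)+1) _
      rw [coeff_CX_mul, coeff_mk]
      show r (n+1) * _ = b * q (n+1)
      have hne : ((n:ℂ)+1) ≠ 0 := Nat.cast_add_one_ne_zero n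
      simp only [hr, hq, gaugeCo]
      field_simp
  -- E22 : x² t22' = c x t12
  have E22 : (X : PowerSeries ℂ)^2 * derivativeFun (mk s) = C c * X * mk p := by
    ext n
    rcases n with _ | _ | n
    · rw [coeff_X2D_zero, coeff_CX_mul_zero]
    · rw [coeff_X2D_one]
      show 0 = coeff (0+1) _
      rw [coeff_CX_mul, coeff_mk]
      simp [hp, gaugeCo]
    · rw [coeff_X2D]
      show _ = coeff ((n+1)+1) _
      rw [coeff_CX_mul, coeff_mk]
      show s (n+1) * _ = c * p (n+1)
      have hne : ((n:ℂ)+1) ≠ 0 := Nat.cast_add_one_ne_zero n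
      simp only [hs, hp, gaugeCo]
      field_simp
  -- E12 : x² t12' = 2(1+ax) t12 + b x t22
  have E12 : (X : PowerSeries ℂ)^2 * derivativeFun (mk p) =
      2 * mk p + 2 * (C a * X * mk p) + C b * X * mk s := by
    ext n
    rcases n with _ | _ | n
    · rw [coeff_X2D_zero]
      rw [map_add, map_add, coeff_two_mul', coeff_two_mul', coeff_CX_mul_zero,
        coeff_CX_mul_zero, coeff_mk]
      simp [hp, gaugeCo]
    · rw [coeff_X2D_one]
      show 0 = coeff (0+1) _
      rw [map_add, map_add, coeff_two_mul', coeff_two_mul', coeff_CX_mul, coeff_CX_mul,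
        coeff_mk, coeff_mk, coeff_mk]
      show 0 = 2 * p 1 + 2 * (a * p 0) + b * s 0
      simp only [hp, hs, gaugeCo]
      push_cast
      ring
    · rw [coeff_X2D]
      show _ = coeff ((n+1)+1) _
      rw [map_add, map_add, coeff_two_mul', coeff_two_mul', coeff_CX_mul, coeff_CX_mul,
        coeff_mk, coeff_mk, coeff_mk]
      show p (n+1) * _ = 2 * p (n+2) + 2 * (a * p (n+1)) + b * s (n+1)
      simp only [hp, hs, gaugeCo]
      push_cast
      ring
  -- E21 : x² t21' = c x t11 − 2(1+ax) t21
  have E21 : (X : PowerSeries ℂ)^2 * derivativeFun (mk q) =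
      C c * X * mk r - 2 * mk q - 2 * (C a * X * mk q) := by
    ext n
    rcases n with _ | _ | n
    · rw [coeff_X2D_zero]
      rw [map_sub, map_sub, coeff_two_mul', coeff_two_mul', coeff_CX_mul_zero,
        coeff_CX_mul_zero, coeff_mk]
      simp [hq, gaugeCo]
    · rw [coeff_X2D_one]
      show 0 = coeff (0+1) _
      rw [map_sub, map_sub, coeff_two_mul', coeff_two_mul', coeff_CX_mul, coeff_CX_mul,
        coeff_mk, coeff_mk, coeff_mk]
      show 0 = c * r 0 - 2 * q 1 - 2 * (a * q 0)
      simp only [hq, hr, gaugeCo]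
      push_cast
      ring
    · rw [coeff_X2D]
      show _ = coeff ((n+1)+1) _
      rw [map_sub, map_sub, coeff_two_mul', coeff_two_mul', coeff_CX_mul, coeff_CX_mul,
        coeff_mk, coeff_mk, coeff_mk]
      show q (n+1) * _ = c * r (n+1) - 2 * q (n+2) - 2 * (a * q (n+1))
      simp only [hq, hr, gaugeCo]
      push_cast
      ring
  refine ⟨!![mk r, mk p; mk q, mk s], ?_, ?_⟩
  · ext i j
    fin_cases i <;> fin_cases j <;>
      simp [hr, hp, hq, hs, gaugeCo, Matrix.one_apply]
  · apply Matrix.ext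
    intro i j
    fin_cases i <;> fin_cases j <;>
      simp only [Fin.mk_zero, Fin.mk_one, Matrix.of_apply, Fin.isValue, Matrix.smul_apply, Matrix.map_apply,
        Matrix.sub_apply, Matrix.mul_apply, Fin.sum_univ_two, Matrix.cons_val', Matrix.cons_val_zero,
        Matrix.cons_val_one, Matrix.head_cons, Matrix.head_fin_const, Matrix.empty_val',
        Matrix.cons_val_fin_one, smul_eq_mul]
    · linear_combination E11
    · linear_combination E12
    · linear_combination E21
    · linear_combination E22
end

section
/- Let a ∈ ℂ and let F̂ ∈ ℂ[[x,u₁,u₂]] be a formal power series satisfying x²·∂F̂/∂x + (1+ax)·u₁·∂F̂/∂u₁ − (1+ax)·u₂·∂F̂/∂u₂ = 0 as a formal power series (i.e., F̂ is a formal first integral of the vector field X_a). Then there exists a one-variable formal power series Ĝ ∈ ℂ[[z]] such that F̂ equals the substitution of the series u₁u₂ into Ĝ, i.e., F̂(x,u₁,u₂) = Ĝ(u₁u₂). In other words, h(u₁,u₂) = u₁u₂ is a primitive first integral of X_a: every formal first integral of X_a factors through h. -/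
/-- The substitution of `u₁u₂` (the product of the second and third variables)
into a one-variable formal power series `G`: the coefficient of
`x^j u₁^k u₂^l` in `G(u₁u₂)` is the `k`-th coefficient of `G` when `j = 0` and
`k = l`, and `0` otherwise. -/
noncomputable def substU1U2 (G : PowerSeries ℂ) : MvPowerSeries (Fin 3) ℂ :=
  fun d => if d 0 = 0 ∧ d 1 = d 2 then PowerSeries.coeff (R := ℂ) (d 1) G else 0

open MvPowerSeries

namespace Stmt5Aux

open Finsupp

noncomputable def DD (j k l : ℕ) : Fin 3 →₀ ℕ :=
  single 0 j + single 1 k + single 2 l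

lemma DD_apply0 (j k l : ℕ) : DD j k l 0 = j := by simp [DD, Finsupp.single_apply]
lemma DD_apply1 (j k l : ℕ) : DD j k l 1 = k := by simp [DD, Finsupp.single_apply]
lemma DD_apply2 (j k l : ℕ) : DD j k l 2 = l := by simp [DD, Finsupp.single_apply]

lemma eq_DD (d : Fin 3 →₀ ℕ) : d = DD (d 0) (d 1) (d 2) := by
  ext i; fin_cases i <;> simp [DD, Finsupp.single_apply]

lemma dec0 (j k l : ℕ) : DD j k l + single 0 1 = DD (j+1) k l := by
  ext i; fin_cases i <;> simp [DD, Finsupp.single_apply]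

lemma dec0' (j k l : ℕ) : DD j k l + single 1 1 = DD j (k+1) l := by
  ext i; fin_cases i <;> simp [DD, Finsupp.single_apply]

lemma dec0'' (j k l : ℕ) : DD j k l + single 2 1 = DD j k (l+1) := by
  ext i; fin_cases i <;> simp [DD, Finsupp.single_apply]

lemma dec1 (j k l : ℕ) : DD (j+2) k l = single 0 2 + DD j k l := by
  ext i; fin_cases i <;> simp [DD, Finsupp.single_apply] <;> omega

lemma dec2 (j k l : ℕ) : DD j (k+1) l = single 1 1 + DD j k l := by
  ext i; fin_cases i <;> simp [DD, Finsupp.single_apply] <;> omega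

lemma dec3 (j k l : ℕ) : DD j k (l+1) = single 2 1 + DD j k l := by
  ext i; fin_cases i <;> simp [DD, Finsupp.single_apply] <;> omega

lemma dec4 (j k l : ℕ) : DD (j+1) (k+1) l = (single 0 1 + single 1 1) + DD j k l := by
  ext i; fin_cases i <;> simp [DD, Finsupp.single_apply] <;> omega

lemma dec5 (j k l : ℕ) : DD (j+1) k (l+1) = (single 0 1 + single 2 1) + DD j k l := by
  ext i; fin_cases i <;> simp [DD, Finsupp.single_apply] <;> omega

lemma coeff_mvPderiv {n : ℕ} (i : Fin n) (F : MvPowerSeries (Fin n) ℂ) (d : Fin n →₀ ℕ) :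
    coeff (R := ℂ) d (mvPderiv i F) = ((d i : ℕ) + 1 : ℂ) * coeff (R := ℂ) (d + Finsupp.single i 1) F := rfl

variable (F : MvPowerSeries (Fin 3) ℂ) (a : ℂ)

-- term lemmas
lemma T0 (j k l : ℕ) :
    coeff (R := ℂ) (DD (j+2) k l) (monomial (R := ℂ) (single 0 2) (1:ℂ) * mvPderiv 0 F)
      = ((j:ℂ)+1) * coeff (R := ℂ) (DD (j+1) k l) F := by
  rw [dec1, coeff_add_monomial_mul, one_mul, coeff_mvPderiv, DD_apply0, dec0]

lemma T0z (k l : ℕ) :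
    coeff (R := ℂ) (DD 0 k l) (monomial (R := ℂ) (single 0 2) (1:ℂ) * mvPderiv 0 F) = 0 := by
  rw [coeff_monomial_mul, if_neg]
  simp [Finsupp.single_le_iff, DD_apply0]

lemma T0o (k l : ℕ) :
    coeff (R := ℂ) (DD 1 k l) (monomial (R := ℂ) (single 0 2) (1:ℂ) * mvPderiv 0 F) = 0 := by
  rw [coeff_monomial_mul, if_neg]
  simp [Finsupp.single_le_iff, DD_apply0]

lemma T1 (j k l : ℕ) :
    coeff (R := ℂ) (DD j k l) (monomial (R := ℂ) (single 1 1) (1:ℂ) * mvPderiv 1 F)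
      = (k:ℂ) * coeff (R := ℂ) (DD j k l) F := by
  cases k with
  | zero =>
    rw [coeff_monomial_mul, if_neg]
    · simp
    · simp [Finsupp.single_le_iff, DD_apply1]
  | succ k =>
    rw [dec2, coeff_add_monomial_mul, one_mul, coeff_mvPderiv, DD_apply1, dec0', ← dec2]
    push_cast; ring

lemma T2 (j k l : ℕ) :
    coeff (R := ℂ) (DD j k l) (monomial (R := ℂ) (single 2 1) (1:ℂ) * mvPderiv 2 F)
      = (l:ℂ) * coeff (R := ℂ) (DD j k l) F := by
  cases l with
  | zero =>
    rw [coeff_monomial_mul, if_neg]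
    · simp
    · simp [Finsupp.single_le_iff, DD_apply2]
  | succ l =>
    rw [dec3, coeff_add_monomial_mul, one_mul, coeff_mvPderiv, DD_apply2, dec0'', ← dec3]
    push_cast; ring

lemma T3 (j k l : ℕ) :
    coeff (R := ℂ) (DD (j+1) k l) (monomial (R := ℂ) (single 0 1 + single 1 1) a * mvPderiv 1 F)
      = a * (k:ℂ) * coeff (R := ℂ) (DD j k l) F := by
  cases k with
  | zero =>
    rw [coeff_monomial_mul, if_neg]
    · simp
    · intro h
      have := h 1
      simp [Finsupp.single_apply, DD_apply1] at this
  | succ k =>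
    rw [dec4, coeff_add_monomial_mul, coeff_mvPderiv, DD_apply1, dec0']
    push_cast; ring

lemma T3z (k l : ℕ) :
    coeff (R := ℂ) (DD 0 k l) (monomial (R := ℂ) (single 0 1 + single 1 1) a * mvPderiv 1 F) = 0 := by
  rw [coeff_monomial_mul, if_neg]
  intro h
  have := h 0
  simp [Finsupp.single_apply, DD_apply0] at this

lemma T4 (j k l : ℕ) :
    coeff (R := ℂ) (DD (j+1) k l) (monomial (R := ℂ) (single 0 1 + single 2 1) a * mvPderiv 2 F)
      = a * (l:ℂ) * coeff (R := ℂ) (DD j k l) F := by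
  cases l with
  | zero =>
    rw [coeff_monomial_mul, if_neg]
    · simp
    · intro h
      have := h 2
      simp [Finsupp.single_apply, DD_apply2] at this
  | succ l =>
    rw [dec5, coeff_add_monomial_mul, coeff_mvPderiv, DD_apply2, dec0'']
    push_cast; ring

lemma T4z (k l : ℕ) :
    coeff (R := ℂ) (DD 0 k l) (monomial (R := ℂ) (single 0 1 + single 2 1) a * mvPderiv 2 F) = 0 := by
  rw [coeff_monomial_mul, if_neg]
  intro h
  have := h 0
  simp [Finsupp.single_apply, DD_apply0] at this

end Stmt5Aux

open Stmt5Aux Finsupp in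
/-- `h(u₁,u₂) = u₁u₂` is a primitive first integral of
`X_a = x² ∂ₓ + (1+ax)(u₁ ∂_{u₁} − u₂ ∂_{u₂})`: every formal first integral
`F̂ ∈ ℂ[[x,u₁,u₂]]` of `X_a` is of the form `Ĝ(u₁u₂)` for some one-variable
formal power series `Ĝ`. -/
theorem stmt5 (a : ℂ) (F : MvPowerSeries (Fin 3) ℂ)
    (hF : (X 0 : MvPowerSeries (Fin 3) ℂ) ^ 2 * mvPderiv 0 F
        + (1 + C (σ := Fin 3) (R := ℂ) a * X 0) * X 1 * mvPderiv 1 F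
        - (1 + C (σ := Fin 3) (R := ℂ) a * X 0) * X 2 * mvPderiv 2 F = 0) :
    ∃ G : PowerSeries ℂ, F = substU1U2 G := by
  -- rewrite the equation in monomial form
  have e1 : (X 0 : MvPowerSeries (Fin 3) ℂ)^2 = monomial (R := ℂ) (single 0 2) 1 := X_pow_eq 0 2
  have e2 : ((1 + C (σ := Fin 3) (R := ℂ) a * X 0) * X 1 : MvPowerSeries (Fin 3) ℂ)
      = monomial (R := ℂ) (single 1 1) 1 + monomial (R := ℂ) (single 0 1 + single 1 1) a := by
    rw [X_def 0, X_def 1, ← monomial_zero_eq_C_apply, monomial_mul_monomial, add_mul, one_mul,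
      monomial_mul_monomial]
    simp
  have e3 : ((1 + C (σ := Fin 3) (R := ℂ) a * X 0) * X 2 : MvPowerSeries (Fin 3) ℂ)
      = monomial (R := ℂ) (single 2 1) 1 + monomial (R := ℂ) (single 0 1 + single 2 1) a := by
    rw [X_def 0, X_def 2, ← monomial_zero_eq_C_apply, monomial_mul_monomial, add_mul, one_mul,
      monomial_mul_monomial]
    simp
  rw [e1, e2, e3, add_mul, add_mul] at hF
  have key : ∀ d : Fin 3 →₀ ℕ,
      coeff (R := ℂ) d (monomial (R := ℂ) (single 0 2) (1:ℂ) * mvPderiv 0 F)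
      + coeff (R := ℂ) d (monomial (R := ℂ) (single 1 1) (1:ℂ) * mvPderiv 1 F)
      + coeff (R := ℂ) d (monomial (R := ℂ) (single 0 1 + single 1 1) a * mvPderiv 1 F)
      - coeff (R := ℂ) d (monomial (R := ℂ) (single 2 1) (1:ℂ) * mvPderiv 2 F)
      - coeff (R := ℂ) d (monomial (R := ℂ) (single 0 1 + single 2 1) a * mvPderiv 2 F) = 0 := by
    intro d
    have h := congrArg (coeff (R := ℂ) d) hF
    simp only [map_add, map_sub, map_zero] at h
    linear_combination h
  -- the three coefficient relations
  have rel0 : ∀ k l : ℕ, ((k:ℂ) - l) * coeff (R := ℂ) (DD 0 k l) F = 0 := by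
    intro k l
    have h := key (DD 0 k l)
    rw [T0z, T1, T3z, T2, T4z] at h
    linear_combination h
  have rel1 : ∀ k l : ℕ,
      ((k:ℂ) - l) * coeff (R := ℂ) (DD 1 k l) F + a * ((k:ℂ) - l) * coeff (R := ℂ) (DD 0 k l) F = 0 := by
    intro k l
    have h := key (DD 1 k l)
    rw [T0o, T1, show (1:ℕ) = 0 + 1 from rfl] at h
    rw [T3, T2, T4] at h
    linear_combination h
  have rel2 : ∀ j k l : ℕ,
      ((k:ℂ) - l) * coeff (R := ℂ) (DD (j+2) k l) F
        + (((j:ℂ)+1) + a * ((k:ℂ) - l)) * coeff (R := ℂ) (DD (j+1) k l) F = 0 := by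
    intro j k l
    have h := key (DD (j+2) k l)
    rw [T0, T1, show j + 2 = (j+1) + 1 from rfl, T3, T2, T4] at h
    linear_combination h
  -- vanishing of bad coefficients
  have vanish : ∀ j k l : ℕ, ¬(j = 0 ∧ k = l) → coeff (R := ℂ) (DD j k l) F = 0 := by
    intro j k l h
    by_cases hkl : k = l
    · subst hkl
      have hj : j ≠ 0 := fun hj => h ⟨hj, rfl⟩
      obtain ⟨j', rfl⟩ := Nat.exists_eq_succ_of_ne_zero hj
      have := rel2 j' k k
      simp only [sub_self, zero_mul, mul_zero, add_zero, zero_add] at this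
      have hne : ((j':ℂ) + 1) ≠ 0 := by
        have : ((j':ℂ) + 1) = ((j' + 1 : ℕ) : ℂ) := by push_cast; ring
        rw [this]
        exact_mod_cast Nat.succ_ne_zero j'
      exact (mul_eq_zero.mp this).resolve_left hne
    · have hne : ((k:ℂ) - l) ≠ 0 := by
        refine sub_ne_zero.mpr ?_
        exact_mod_cast hkl
      clear h
      induction j with
      | zero => exact (mul_eq_zero.mp (rel0 k l)).resolve_left hne
      | succ j ih =>
        cases j with
        | zero =>
          have h1 := rel1 k l
          rw [ih, mul_zero, add_zero] at h1
          exact (mul_eq_zero.mp h1).resolve_left hne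
        | succ j' =>
          have h2 := rel2 j' k l
          rw [ih, mul_zero, add_zero] at h2
          exact (mul_eq_zero.mp h2).resolve_left hne
  refine ⟨PowerSeries.mk fun k => coeff (R := ℂ) (DD 0 k k) F, ?_⟩
  funext d
  show F d = substU1U2 _ d
  unfold substU1U2
  split_ifs with h
  · rw [PowerSeries.coeff_mk]
    have hd : d = DD 0 (d 1) (d 1) := by
      conv_lhs => rw [eq_DD d]
      rw [h.1, ← h.2]
    calc F d = coeff (R := ℂ) d F := rfl
      _ = coeff (R := ℂ) (DD 0 (d 1) (d 1)) F := by rw [← hd]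
  · have : coeff (R := ℂ) (DD (d 0) (d 1) (d 2)) F = 0 := vanish _ _ _ h
    calc F d = coeff (R := ℂ) d F := rfl
      _ = 0 := by rw [eq_DD d]; exact this
end

section
/- Let a ∈ ℂ and let F̂ ∈ ℂ[[x,u₁,u₂]] satisfy x²·∂F̂/∂x + (1+ax)·u₁·∂F̂/∂u₁ − (1+ax)·u₂·∂F̂/∂u₂ = 0 as a formal power series. Then F̂ does not depend on x, i.e., ∂F̂/∂x = 0; equivalently, every monomial x^j u₁^k u₂^l appearing with nonzero coefficient in F̂ has j = 0. -/
open MvPowerSeries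

noncomputable def dd (j k l : ℕ) : Fin 3 →₀ ℕ :=
  Finsupp.single 0 j + Finsupp.single 1 k + Finsupp.single 2 l

@[simp] lemma dd_apply0 (j k l : ℕ) : dd j k l 0 = j := by
  simp [dd, Finsupp.single_apply]
@[simp] lemma dd_apply1 (j k l : ℕ) : dd j k l 1 = k := by
  simp [dd, Finsupp.single_apply]
@[simp] lemma dd_apply2 (j k l : ℕ) : dd j k l 2 = l := by
  simp [dd, Finsupp.single_apply]

lemma dd_add0 (p q k l : ℕ) : dd (p + q) k l = Finsupp.single 0 p + dd q k l := by
  simp only [dd, Finsupp.single_add]; abel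

lemma dd_add1 (j p q l : ℕ) : dd j (p + q) l = Finsupp.single 1 p + dd j q l := by
  simp only [dd, Finsupp.single_add]; abel

lemma dd_add2 (j k p q : ℕ) : dd j k (p + q) = Finsupp.single 2 p + dd j k q := by
  simp only [dd, Finsupp.single_add]; abel

lemma dd_split0 (j k l : ℕ) : dd (j + 2) k l = Finsupp.single 0 2 + dd j k l := by
  rw [← dd_add0]; congr 1; omega

lemma dd_split1 (j k l : ℕ) : dd j (k + 1) l = Finsupp.single 1 1 + dd j k l := by
  rw [← dd_add1]; congr 1; omega

lemma dd_split2 (j k l : ℕ) : dd j k (l + 1) = Finsupp.single 2 1 + dd j k l := by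
  rw [← dd_add2]; congr 1; omega

lemma dd_succ0 (j k l : ℕ) : dd j k l + Finsupp.single 0 1 = dd (j + 1) k l := by
  rw [add_comm, ← dd_add0]; congr 1; omega

lemma dd_succ1 (j k l : ℕ) : dd j k l + Finsupp.single 1 1 = dd j (k + 1) l := by
  rw [add_comm, ← dd_add1]; congr 1; omega

lemma dd_succ2 (j k l : ℕ) : dd j k l + Finsupp.single 2 1 = dd j k (l + 1) := by
  rw [add_comm, ← dd_add2]; congr 1; omega

lemma dd_add01 (j k l : ℕ) :
    dd (j + 1) (k + 1) l = (Finsupp.single 0 1 + Finsupp.single 1 1) + dd j k l := by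
  simp only [dd, Finsupp.single_add]; abel

lemma dd_add02 (j k l : ℕ) :
    dd (j + 1) k (l + 1) = (Finsupp.single 0 1 + Finsupp.single 2 1) + dd j k l := by
  simp only [dd, Finsupp.single_add]; abel

lemma eq_dd (d : Fin 3 →₀ ℕ) : d = dd (d 0) (d 1) (d 2) := by
  ext i
  fin_cases i <;> simp [dd, Finsupp.single_apply]

lemma coeff_mvPderiv (i : Fin 3) (F : MvPowerSeries (Fin 3) ℂ) (d : Fin 3 →₀ ℕ) :
    coeff (R := ℂ) d (mvPderiv i F) = ((d i : ℕ) + 1 : ℂ) * coeff (R := ℂ) (d + Finsupp.single i 1) F := rfl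

/-- Abbreviation for the coefficients of `F`. -/
noncomputable def cc (F : MvPowerSeries (Fin 3) ℂ) (j k l : ℕ) : ℂ :=
  coeff (R := ℂ) (dd j k l) F

section terms

variable (a : ℂ) (F : MvPowerSeries (Fin 3) ℂ)

lemma term0 (m k l : ℕ) :
    coeff (R := ℂ) (dd (m + 1) k l) ((X 0 : MvPowerSeries (Fin 3) ℂ) ^ 2 * mvPderiv 0 F)
      = (m : ℂ) * cc F m k l := by
  rw [X_pow_eq]
  rcases m with _ | m
  · rw [coeff_monomial_mul, if_neg]
    · simp
    · intro h
      have := Finsupp.le_def.mp h 0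
      simp [Finsupp.single_apply] at this
  · rw [show m + 1 + 1 = m + 2 from rfl, dd_split0, coeff_add_monomial_mul, one_mul,
      coeff_mvPderiv, dd_succ0]
    simp only [cc, dd_apply0]
    push_cast
    ring

lemma term0z (k l : ℕ) :
    coeff (R := ℂ) (dd 0 k l) ((X 0 : MvPowerSeries (Fin 3) ℂ) ^ 2 * mvPderiv 0 F) = 0 := by
  rw [X_pow_eq, coeff_monomial_mul, if_neg]
  intro h
  have := Finsupp.le_def.mp h 0
  simp [Finsupp.single_apply] at this

lemma term1 (j k l : ℕ) :
    coeff (R := ℂ) (dd j k l) ((X 1 : MvPowerSeries (Fin 3) ℂ) * mvPderiv 1 F)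
      = (k : ℂ) * cc F j k l := by
  rw [X_def]
  rcases k with _ | k
  · rw [coeff_monomial_mul, if_neg]
    · simp
    · intro h
      have := Finsupp.le_def.mp h 1
      simp [Finsupp.single_apply] at this
  · rw [dd_split1, coeff_add_monomial_mul, one_mul, coeff_mvPderiv, dd_succ1]
    simp only [cc, dd_apply1]
    push_cast
    ring

lemma term2 (j k l : ℕ) :
    coeff (R := ℂ) (dd j k l) ((X 2 : MvPowerSeries (Fin 3) ℂ) * mvPderiv 2 F)
      = (l : ℂ) * cc F j k l := by
  rw [X_def]
  rcases l with _ | l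
  · rw [coeff_monomial_mul, if_neg]
    · simp
    · intro h
      have := Finsupp.le_def.mp h 2
      simp [Finsupp.single_apply] at this
  · rw [dd_split2, coeff_add_monomial_mul, one_mul, coeff_mvPderiv, dd_succ2]
    simp only [cc, dd_apply2]
    push_cast
    ring

lemma term1a (m k l : ℕ) :
    coeff (R := ℂ) (dd (m + 1) k l)
        (monomial (R := ℂ) (Finsupp.single 0 1 + Finsupp.single 1 1) a * mvPderiv 1 F)
      = a * (k : ℂ) * cc F m k l := by
  rcases k with _ | k
  · rw [coeff_monomial_mul, if_neg]
    · simp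
    · intro h
      have := Finsupp.le_def.mp h 1
      simp [Finsupp.single_apply] at this
  · rw [dd_add01, coeff_add_monomial_mul, coeff_mvPderiv, dd_succ1]
    simp only [cc, dd_apply1]
    push_cast
    ring

lemma term2a (m k l : ℕ) :
    coeff (R := ℂ) (dd (m + 1) k l)
        (monomial (R := ℂ) (Finsupp.single 0 1 + Finsupp.single 2 1) a * mvPderiv 2 F)
      = a * (l : ℂ) * cc F m k l := by
  rcases l with _ | l
  · rw [coeff_monomial_mul, if_neg]
    · simp
    · intro h
      have := Finsupp.le_def.mp h 2
      simp [Finsupp.single_apply] at this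
  · rw [dd_add02, coeff_add_monomial_mul, coeff_mvPderiv, dd_succ2]
    simp only [cc, dd_apply2]
    push_cast
    ring

lemma term1az (k l : ℕ) :
    coeff (R := ℂ) (dd 0 k l)
        (monomial (R := ℂ) (Finsupp.single 0 1 + Finsupp.single 1 1) a * mvPderiv 1 F) = 0 := by
  rw [coeff_monomial_mul, if_neg]
  intro h
  have := Finsupp.le_def.mp h 0
  simp [Finsupp.single_apply] at this

lemma term2az (k l : ℕ) :
    coeff (R := ℂ) (dd 0 k l)
        (monomial (R := ℂ) (Finsupp.single 0 1 + Finsupp.single 2 1) a * mvPderiv 2 F) = 0 := by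
  rw [coeff_monomial_mul, if_neg]
  intro h
  have := Finsupp.le_def.mp h 0
  simp [Finsupp.single_apply] at this

end terms

/-- a formal first integral `F̂ ∈ ℂ[[x,u₁,u₂]]` of
`X_a = x² ∂ₓ + (1+ax)(u₁ ∂_{u₁} − u₂ ∂_{u₂})` does not depend on `x`:
`∂F̂/∂x = 0`, and equivalently every monomial `x^j u₁^k u₂^l` appearing with a
nonzero coefficient in `F̂` has `j = 0`. -/
theorem stmt6 (a : ℂ) (F : MvPowerSeries (Fin 3) ℂ)
    (hF : (X 0 : MvPowerSeries (Fin 3) ℂ) ^ 2 * mvPderiv 0 F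
        + (1 + C (σ := Fin 3) (R := ℂ) a * X 0) * X 1 * mvPderiv 1 F
        - (1 + C (σ := Fin 3) (R := ℂ) a * X 0) * X 2 * mvPderiv 2 F = 0) :
    mvPderiv 0 F = 0 ∧
    ∀ j k l : ℕ,
      MvPowerSeries.coeff (R := ℂ)
          (Finsupp.single 0 j + Finsupp.single 1 k + Finsupp.single 2 l) F ≠ 0 →
        j = 0 := by
  have hM1 : C (σ := Fin 3) (R := ℂ) a * X 0 * X 1
      = monomial (R := ℂ) (Finsupp.single 0 1 + Finsupp.single 1 1) a := by
    rw [show C (σ := Fin 3) (R := ℂ) a = monomial (R := ℂ) 0 a from rfl, X_def, X_def,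
      monomial_mul_monomial, monomial_mul_monomial]
    simp
  have hM2 : C (σ := Fin 3) (R := ℂ) a * X 0 * X 2
      = monomial (R := ℂ) (Finsupp.single 0 1 + Finsupp.single 2 1) a := by
    rw [show C (σ := Fin 3) (R := ℂ) a = monomial (R := ℂ) 0 a from rfl, X_def, X_def,
      monomial_mul_monomial, monomial_mul_monomial]
    simp
  have hrw : (X 0 : MvPowerSeries (Fin 3) ℂ) ^ 2 * mvPderiv 0 F
        + ((X 1 : MvPowerSeries (Fin 3) ℂ) * mvPderiv 1 F
          + monomial (R := ℂ) (Finsupp.single 0 1 + Finsupp.single 1 1) a * mvPderiv 1 F)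
        - ((X 2 : MvPowerSeries (Fin 3) ℂ) * mvPderiv 2 F
          + monomial (R := ℂ) (Finsupp.single 0 1 + Finsupp.single 2 1) a * mvPderiv 2 F) = 0 := by
    rw [← hM1, ← hM2, ← hF]; ring
  have hco : ∀ d : Fin 3 →₀ ℕ,
      coeff (R := ℂ) d ((X 0 : MvPowerSeries (Fin 3) ℂ) ^ 2 * mvPderiv 0 F)
        + (coeff (R := ℂ) d ((X 1 : MvPowerSeries (Fin 3) ℂ) * mvPderiv 1 F)
          + coeff (R := ℂ) d (monomial (R := ℂ) (Finsupp.single 0 1 + Finsupp.single 1 1) a * mvPderiv 1 F))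
        - (coeff (R := ℂ) d ((X 2 : MvPowerSeries (Fin 3) ℂ) * mvPderiv 2 F)
          + coeff (R := ℂ) d (monomial (R := ℂ) (Finsupp.single 0 1 + Finsupp.single 2 1) a * mvPderiv 2 F))
        = 0 := by
    intro d
    have := congrArg (coeff (R := ℂ) d) hrw
    simpa only [map_add, map_sub, map_zero] using this
  have h0 : ∀ k l : ℕ, (k : ℂ) * cc F 0 k l - (l : ℂ) * cc F 0 k l = 0 := by
    intro k l
    have h := hco (dd 0 k l)
    rw [term0z, term1, term1az, term2, term2az] at h
    linear_combination h
  have hrec : ∀ m k l : ℕ,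
      (m : ℂ) * cc F m k l + (k : ℂ) * cc F (m + 1) k l + a * (k : ℂ) * cc F m k l
        - (l : ℂ) * cc F (m + 1) k l - a * (l : ℂ) * cc F m k l = 0 := by
    intro m k l
    have h := hco (dd (m + 1) k l)
    rw [term0, term1, term1a, term2, term2a] at h
    linear_combination h
  have hz : ∀ k l : ℕ, k ≠ l → ∀ j, cc F j k l = 0 := by
    intro k l hkl
    have hne : (k : ℂ) - (l : ℂ) ≠ 0 := by
      rw [sub_ne_zero]
      exact_mod_cast hkl
    intro j
    induction j with
    | zero =>
      have h : ((k : ℂ) - (l : ℂ)) * cc F 0 k l = 0 := by linear_combination h0 k l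
      exact (mul_eq_zero.mp h).resolve_left hne
    | succ n ih =>
      have h : ((k : ℂ) - (l : ℂ)) * cc F (n + 1) k l = 0 := by
        linear_combination hrec n k l - ((n : ℂ) + a * ((k : ℂ) - (l : ℂ))) * ih
      exact (mul_eq_zero.mp h).resolve_left hne
  have main : ∀ j k l : ℕ, cc F (j + 1) k l = 0 := by
    intro j k l
    by_cases hkl : k = l
    · subst hkl
      have h' := hrec (j + 1) k k
      push_cast at h'
      have h : ((j : ℂ) + 1) * cc F (j + 1) k k = 0 := by
        linear_combination h'
      have hne : ((j : ℂ) + 1) ≠ 0 := by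
        exact_mod_cast Nat.succ_ne_zero j
      exact (mul_eq_zero.mp h).resolve_left hne
    · exact hz k l hkl (j + 1)
  constructor
  · apply MvPowerSeries.ext
    intro d
    rw [coeff_mvPderiv]
    have hd : d + Finsupp.single 0 1 = dd (d 0 + 1) (d 1) (d 2) := by
      conv_lhs => rw [eq_dd d]
      exact dd_succ0 _ _ _
    rw [hd]
    have h3 := main (d 0) (d 1) (d 2)
    rw [cc] at h3
    rw [h3, mul_zero, map_zero (coeff (R := ℂ) d)]
  · intro j k l hne
    by_contra hj
    rcases Nat.exists_eq_succ_of_ne_zero hj with ⟨j', rfl⟩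
    have := main j' k l
    rw [cc] at this
    exact hne this
end

section
/- Let G : ℂ → ℂ be analytic on a neighborhood of 0 ∈ ℂ and let c ∈ ℂ with c ≠ 0. Suppose that G((u₁ + c·u₂)·u₂) = G(u₁·u₂) for all (u₁,u₂) in a neighborhood of the origin in ℂ². Then G is constant on a neighborhood of 0. -/
open Filter

/-- if `G : ℂ → ℂ` is analytic on a neighborhood of `0`, `c ≠ 0`,
and `G ((u₁ + c·u₂)·u₂) = G (u₁·u₂)` for all `(u₁, u₂)` in a neighborhood of
the origin of `ℂ²`, then `G` is constant on a neighborhood of `0`. -/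
theorem stmt8 (G : ℂ → ℂ) (c : ℂ) (hc : c ≠ 0)
    (hG : ∃ V : Set ℂ, IsOpen V ∧ (0 : ℂ) ∈ V ∧ AnalyticOnNhd ℂ G V)
    (hinv : ∀ᶠ p : ℂ × ℂ in nhds (0 : ℂ × ℂ),
      G ((p.1 + c * p.2) * p.2) = G (p.1 * p.2)) :
    ∃ W : Set ℂ, IsOpen W ∧ (0 : ℂ) ∈ W ∧ ∀ z ∈ W, G z = G 0 := by
  rw [Metric.eventually_nhds_iff] at hinv
  obtain ⟨ε, hε, h⟩ := hinv
  have hcpos : (0 : ℝ) < ‖c‖ := norm_pos_iff.mpr hc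
  refine ⟨Metric.ball 0 (‖c‖ * (ε / 2) ^ 2), Metric.isOpen_ball, by
    simp only [Metric.mem_ball, dist_self]
    positivity, ?_⟩
  intro z hz
  simp only [Metric.mem_ball, dist_zero_right] at hz
  obtain ⟨u, hu⟩ := IsAlgClosed.exists_pow_nat_eq (k := ℂ) (z / c) (n := 2) (by norm_num)
  have hcu' : ((0 : ℂ) + c * u) * u = z := by
    have h2 : c * (u * u) = z := by
      have : u * u = z / c := by rw [← hu]; ring
      rw [this, mul_div_cancel₀ _ hc]
    calc ((0 : ℂ) + c * u) * u = c * (u * u) := by ring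
      _ = z := h2
  have hnu2 : ‖u‖ ^ 2 < (ε / 2) ^ 2 := by
    have h1 : ‖u‖ ^ 2 = ‖z‖ / ‖c‖ := by
      rw [← norm_pow, hu, norm_div]
    rw [h1]
    rw [div_lt_iff₀ hcpos]
    calc ‖z‖ < ‖c‖ * (ε / 2) ^ 2 := hz
      _ = (ε / 2) ^ 2 * ‖c‖ := by ring
  have hnu : ‖u‖ < ε := by
    have := lt_of_pow_lt_pow_left₀ 2 (le_of_lt (half_pos hε)) hnu2
    linarith
  have hdist : dist ((0 : ℂ), u) (0 : ℂ × ℂ) < ε := by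
    rw [Prod.dist_eq]
    simp only [dist_self, dist_zero_right]
    simpa using hnu
  have hres := h hdist
  simp only [] at hres
  rw [hcu', zero_mul] at hres
  exact hres
end
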